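/- Let η ≥ 2 be an integer, let A be a nonempty finite subset of ZMod η, and let s ≥ 1 be a real number such that Spec_{1−1/s}(A) = {0}. Then for every natural number κ with κ ≥ s·ln η, the set κA − κA equals all of ZMod η; that is, every element of ZMod η is a sum of κ elements of A minus a sum of κ elements of A. -/

import Mathlib

open Pointwise

/-- The `κ`-fold iterated sumset `κA` of a finite subset of `ZMod η`
(with `0A = {0}`). -/
def iterSumset {η : ℕ} (A : Finset (ZMod η)) : ℕ → Finset (ZMod η)
  | 0 => {0}
  | n + 1 => iterSumset A n + A

/-- The normalized Fourier coefficient `Â(j)` of a finite subset of `ZMod η`. -/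
noncomputable def zmodFourier {η : ℕ} (A : Finset (ZMod η)) (j : ZMod η) : ℂ :=
  (A.card : ℂ)⁻¹ *
    ∑ a ∈ A, Complex.exp (2 * (Real.pi : ℂ) * Complex.I * ((a * j).val : ℂ) / (η : ℂ))

noncomputable def eZ (η : ℕ) (x : ZMod η) : ℂ :=
  Complex.exp (2 * (Real.pi : ℂ) * Complex.I * ((x.val : ℕ) : ℂ) / (η : ℂ))

lemma eZ_zero (η : ℕ) [NeZero η] : eZ η 0 = 1 := by
  simp [eZ]

lemma eZ_add (η : ℕ) [NeZero η] (x y : ZMod η) :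
    eZ η (x + y) = eZ η x * eZ η y := by
  have hη : (η : ℂ) ≠ 0 := Nat.cast_ne_zero.mpr (NeZero.ne η)
  rw [eZ, eZ, eZ, ← Complex.exp_add]
  have h : x.val + y.val = (x + y).val + η * ((x.val + y.val) / η) := by
    rw [ZMod.val_add]; exact (Nat.mod_add_div _ _).symm
  have hc : ((x.val : ℕ) : ℂ) + ((y.val : ℕ) : ℂ)
      = (((x + y).val : ℕ) : ℂ) + (η : ℂ) * (((x.val + y.val) / η : ℕ) : ℂ) := by
    exact_mod_cast congrArg (fun m : ℕ => (m : ℂ)) h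
  have key : 2 * (Real.pi : ℂ) * Complex.I * ((x.val : ℕ) : ℂ) / (η : ℂ)
      + 2 * (Real.pi : ℂ) * Complex.I * ((y.val : ℕ) : ℂ) / (η : ℂ)
      = 2 * (Real.pi : ℂ) * Complex.I * (((x + y).val : ℕ) : ℂ) / (η : ℂ)
        + ((((x.val + y.val) / η : ℕ) : ℤ) : ℂ) * (2 * (Real.pi : ℂ) * Complex.I) := by
    rw [← add_div, div_add' _ _ _ hη, div_eq_div_iff hη hη, Int.cast_natCast]
    linear_combination (2 * (Real.pi : ℂ) * Complex.I * (η:ℂ)) * hc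
  rw [key, Complex.exp_add, Complex.exp_int_mul_two_pi_mul_I, mul_one]

lemma abs_eZ (η : ℕ) (x : ZMod η) : ‖eZ η x‖ = 1 := by
  have : 2 * (Real.pi : ℂ) * Complex.I * ((x.val : ℕ) : ℂ) / (η : ℂ)
      = ((2 * Real.pi * (x.val : ℝ) / (η : ℝ) : ℝ) : ℂ) * Complex.I := by
    push_cast; ring
  rw [eZ, this, Complex.norm_exp_ofReal_mul_I]

lemma conj_eZ (η : ℕ) [NeZero η] (x : ZMod η) :
    (starRingEnd ℂ) (eZ η x) = eZ η (-x) := by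
  have h1 : eZ η x * eZ η (-x) = 1 := by
    rw [← eZ_add, add_neg_cancel, eZ_zero]
  have h2 : (starRingEnd ℂ) (eZ η x) = (eZ η x)⁻¹ :=
    (Complex.inv_eq_conj (abs_eZ η x)).symm
  rw [h2, inv_eq_of_mul_eq_one_right h1]

lemma eZ_pow (η : ℕ) [NeZero η] (j : ZMod η) (k : ℕ) :
    eZ η j ^ k = eZ η ((k : ZMod η) * j) := by
  induction k with
  | zero => simp [eZ_zero]
  | succ n ih =>
      rw [pow_succ, ih, ← eZ_add]
      congr 1
      push_cast
      ring

lemma eZ_ne_one (η : ℕ) [NeZero η] (j : ZMod η) (hj : j ≠ 0) : eZ η j ≠ 1 := by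
  have hv0 : 0 < j.val := Nat.pos_of_ne_zero fun h => hj ((ZMod.val_eq_zero j).mp h)
  have hvlt : j.val < η := ZMod.val_lt j
  intro h
  rw [eZ, Complex.exp_eq_one_iff] at h
  obtain ⟨n, hn⟩ := h
  have hη : (η : ℂ) ≠ 0 := Nat.cast_ne_zero.mpr (NeZero.ne η)
  have hpi : (Real.pi : ℂ) ≠ 0 := Complex.ofReal_ne_zero.mpr Real.pi_ne_zero
  have hI : Complex.I ≠ 0 := Complex.I_ne_zero
  have h2 : (2 * (Real.pi : ℂ) * Complex.I) ≠ 0 := by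
    simp [Real.pi_ne_zero, Complex.I_ne_zero, Complex.ofReal_ne_zero]
  rw [div_eq_iff hη] at hn
  have hn2 : 2 * (Real.pi : ℂ) * Complex.I * ((j.val : ℕ) : ℂ)
      = 2 * (Real.pi : ℂ) * Complex.I * ((n : ℂ) * (η : ℂ)) := by
    linear_combination hn
  have hv : ((j.val : ℕ) : ℂ) = (n : ℂ) * (η : ℂ) := mul_left_cancel₀ h2 hn2
  have hvz : (j.val : ℤ) = n * η := by exact_mod_cast hv
  rcases le_or_gt n 0 with h | h
  · have hle : n * (η : ℤ) ≤ 0 := mul_nonpos_of_nonpos_of_nonneg h (by positivity)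
    omega
  · have hge : (η : ℤ) ≤ n * η := le_mul_of_one_le_left (by positivity) h
    omega

lemma sum_eZ_eq_zero (η : ℕ) [NeZero η] (j : ZMod η) (hj : j ≠ 0) :
    ∑ x : ZMod η, eZ η (x * j) = 0 := by
  have hcast : ∀ x : ZMod η, eZ η (x * j) = eZ η j ^ x.val := by
    intro x
    rw [eZ_pow]
    congr 1
    rw [ZMod.natCast_val, ZMod.cast_id]
  calc ∑ x : ZMod η, eZ η (x * j) = ∑ x : ZMod η, eZ η j ^ x.val :=
        Finset.sum_congr rfl fun x _ => hcast x
    _ = ∑ k ∈ Finset.range η, eZ η j ^ k := by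
        refine (Finset.sum_bij (fun k _ => ((k : ℕ) : ZMod η)) ?_ ?_ ?_ ?_).symm
        · intro k _; exact Finset.mem_univ _
        · intro a ha b hb hab
          have := congrArg ZMod.val hab
          rwa [ZMod.val_cast_of_lt (Finset.mem_range.mp ha),
            ZMod.val_cast_of_lt (Finset.mem_range.mp hb)] at this
        · intro x _
          exact ⟨x.val, Finset.mem_range.mpr (ZMod.val_lt x), by simp⟩
        · intro k hk
          rw [ZMod.val_cast_of_lt (Finset.mem_range.mp hk)]
    _ = (eZ η j ^ η - 1) / (eZ η j - 1) := geom_sum_eq (eZ_ne_one η j hj) η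
    _ = 0 := by
        rw [eZ_pow, ZMod.natCast_self, zero_mul, eZ_zero, sub_self, zero_div]

lemma sum_eZ_zero (η : ℕ) [NeZero η] :
    ∑ x : ZMod η, eZ η (x * 0) = (η : ℂ) := by
  simp [eZ_zero, ZMod.card]

/-- number of representations of `x` as a sum of `κ` elements of `A` -/
def repc {η : ℕ} (A : Finset (ZMod η)) : ℕ → ZMod η → ℕ
  | 0, x => if x = 0 then 1 else 0
  | n + 1, x => ∑ a ∈ A, repc A n (x - a)

lemma repc_pos {η : ℕ} (A : Finset (ZMod η)) (κ : ℕ) (x : ZMod η)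
    (h : repc A κ x ≠ 0) : x ∈ iterSumset A κ := by
  induction κ generalizing x with
  | zero =>
      simp only [repc] at h
      split at h
      · subst ‹x = 0›; simp [iterSumset]
      · simp at h
  | succ n ih =>
      simp only [repc] at h
      obtain ⟨a, ha, hra⟩ := Finset.exists_ne_zero_of_sum_ne_zero h
      have := ih _ hra
      show x ∈ iterSumset A n + A
      exact Finset.mem_add.mpr ⟨x - a, this, a, ha, by ring⟩

lemma T_pow_expand (η : ℕ) [NeZero η] (A : Finset (ZMod η)) (κ : ℕ) (j : ZMod η) :
    (∑ a ∈ A, eZ η (a * j)) ^ κ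
      = ∑ x : ZMod η, ((repc A κ x : ℕ) : ℂ) * eZ η (x * j) := by
  induction κ with
  | zero =>
      simp only [pow_zero, repc]
      rw [Finset.sum_eq_single 0]
      · simp [eZ_zero]
      · intro b _ hb; simp [hb]
      · simp
  | succ n ih =>
      rw [pow_succ, ih, Finset.sum_mul_sum]
      have step : ∀ x : ZMod η, ∀ a : ZMod η,
          ((repc A n x : ℕ) : ℂ) * eZ η (x * j) * eZ η (a * j)
            = ((repc A n x : ℕ) : ℂ) * eZ η ((x + a) * j) := by
        intro x a
        rw [mul_assoc, ← eZ_add]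
        congr 2
        ring
      calc ∑ x : ZMod η, ∑ a ∈ A, ((repc A n x : ℕ) : ℂ) * eZ η (x * j) * eZ η (a * j)
          = ∑ a ∈ A, ∑ x : ZMod η, ((repc A n x : ℕ) : ℂ) * eZ η ((x + a) * j) := by
            rw [Finset.sum_comm]
            exact Finset.sum_congr rfl fun a _ => Finset.sum_congr rfl fun x _ => step x a
        _ = ∑ a ∈ A, ∑ y : ZMod η, ((repc A n (y - a) : ℕ) : ℂ) * eZ η (y * j) := by
            refine Finset.sum_congr rfl fun a _ => ?_
            exact Fintype.sum_equiv (Equiv.addRight a) _ _ (fun x => by simp)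
        _ = ∑ y : ZMod η, ((repc A (n + 1) y : ℕ) : ℂ) * eZ η (y * j) := by
            rw [Finset.sum_comm]
            refine Finset.sum_congr rfl fun y _ => ?_
            simp only [repc]
            push_cast
            rw [Finset.sum_mul]

theorem stmt_2 (η : ℕ) (hη : 2 ≤ η) (A : Finset (ZMod η)) (hA : A.Nonempty)
    (s : ℝ) (hs : 1 ≤ s)
    (hspec : {j : ZMod η | ‖zmodFourier A j‖ > 1 - 1 / s} = {0}) :
    ∀ κ : ℕ, (κ : ℝ) ≥ s * Real.log η →
      ∀ z : ZMod η, z ∈ iterSumset A κ - iterSumset A κ := by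
  intro κ hκ z
  haveI : NeZero η := ⟨by omega⟩
  have hη0 : (0:ℝ) < η := by positivity
  have hη1 : (1:ℝ) < η := by exact_mod_cast hη
  have hs0 : (0:ℝ) < s := lt_of_lt_of_le one_pos hs
  have hα0 : (0:ℝ) ≤ 1 - 1/s := by
    have : 1/s ≤ 1 := by rw [div_le_one hs0]; exact hs
    linarith
  have hcard : 0 < A.card := Finset.card_pos.mpr hA
  have hcardR : (0:ℝ) < A.card := by exact_mod_cast hcard
  set T : ZMod η → ℂ := fun j => ∑ a ∈ A, eZ η (a * j) with hT
  have hTp : ∀ j : ZMod η, T j ^ κ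
      = ∑ x : ZMod η, ((repc A κ x : ℕ) : ℂ) * eZ η (x * j) :=
    fun j => T_pow_expand η A κ j
  -- spectral bound
  have hbound : ∀ j : ZMod η, j ≠ 0 → ‖T j‖ ≤ (1 - 1/s) * A.card := by
    intro j hj
    have hnot : j ∉ {j : ZMod η | ‖zmodFourier A j‖ > 1 - 1 / s} := by
      rw [hspec]; simpa using hj
    have hle : ‖zmodFourier A j‖ ≤ 1 - 1/s := not_lt.mp hnot
    have hzf : zmodFourier A j = (A.card : ℂ)⁻¹ * T j := rfl
    have habs : ‖T j‖ = A.card * ‖zmodFourier A j‖ := by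
      rw [hzf, norm_mul, norm_inv, Complex.norm_natCast]
      field_simp
    rw [habs]
    calc (A.card : ℝ) * ‖zmodFourier A j‖
        ≤ A.card * (1 - 1/s) := by
          exact mul_le_mul_of_nonneg_left hle (le_of_lt hcardR)
      _ = (1 - 1/s) * A.card := mul_comm _ _
  have hT0 : T 0 = (A.card : ℂ) := by
    simp [hT, mul_zero, eZ_zero]
  set N : ℂ := ∑ j : ZMod η, (T j ^ κ) * (starRingEnd ℂ) (T j ^ κ) * eZ η (-(z * j))
    with hN
  -- term rewriting to absolute values
  have hterm : ∀ j : ZMod η, (T j ^ κ) * (starRingEnd ℂ) (T j ^ κ) * eZ η (-(z * j))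
      = ((‖T j‖ ^ (2 * κ) : ℝ) : ℂ) * eZ η (-(z * j)) := by
    intro j
    rw [Complex.mul_conj]
    congr 2
    rw [Complex.normSq_eq_norm_sq, norm_pow, ← pow_mul, mul_comm κ 2]
  have hReN : N.re = ∑ j : ZMod η, ‖T j‖ ^ (2 * κ) * (eZ η (-(z * j))).re := by
    rw [hN, Complex.re_sum]
    exact Finset.sum_congr rfl fun j _ => by rw [hterm j, Complex.re_ofReal_mul]
  -- lower bound each nonzero-frequency term
  have hbd : ∀ j ∈ Finset.univ.erase (0 : ZMod η),
      -(((1 - 1/s) * A.card) ^ (2 * κ))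
        ≤ ‖T j‖ ^ (2 * κ) * (eZ η (-(z * j))).re := by
    intro j hj
    have hj0 : j ≠ 0 := Finset.ne_of_mem_erase hj
    have h1 : ‖T j‖ ^ (2 * κ) ≤ ((1 - 1/s) * A.card) ^ (2 * κ) :=
      pow_le_pow_left₀ (norm_nonneg _) (hbound j hj0) _
    have h2 : -1 ≤ (eZ η (-(z * j))).re := by
      have h3 : |(eZ η (-(z * j))).re| ≤ 1 := by
        rw [← abs_eZ η (-(z * j))]; exact Complex.abs_re_le_norm _
      linarith [(abs_le.mp h3).1]
    have h0 : (0:ℝ) ≤ ‖T j‖ ^ (2 * κ) :=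
      pow_nonneg (norm_nonneg _) _
    nlinarith [mul_nonneg h0 (by linarith : (0:ℝ) ≤ (eZ η (-(z * j))).re + 1)]
  -- the analytic estimate
  have hlogη : 0 ≤ Real.log η := Real.log_nonneg (by linarith)
  have hexp1 : (1 - 1/s) ≤ Real.exp (-(1/s)) := by
    have := Real.add_one_le_exp (-(1/s)); linarith
  have hp1 : (1 - 1/s) ^ (2 * κ) ≤ Real.exp (-(1/s)) ^ (2 * κ) :=
    pow_le_pow_left₀ hα0 hexp1 _
  have hp2 : Real.exp (-(1/s)) ^ (2 * κ) = Real.exp (-((2 * κ : ℝ)/s)) := by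
    rw [← Real.exp_nat_mul]; congr 1; push_cast; ring
  have hκs : 2 * Real.log η ≤ (2 * κ : ℝ)/s := by
    rw [le_div_iff₀ hs0]
    have : s * Real.log η ≤ (κ : ℝ) := hκ
    nlinarith
  have hp3 : Real.exp (-((2 * κ : ℝ)/s)) ≤ Real.exp (-(2 * Real.log η)) :=
    Real.exp_le_exp.mpr (by linarith)
  have hp4 : Real.exp (-(2 * Real.log η)) = ((η:ℝ) ^ 2)⁻¹ := by
    rw [Real.exp_neg]
    congr 1
    rw [show (2:ℝ) * Real.log η = Real.log ((η:ℝ) ^ 2) by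
      rw [Real.log_pow]; push_cast; ring]
    exact Real.exp_log (by positivity)
  have hkey : ((η:ℝ) - 1) * (1 - 1/s) ^ (2 * κ) < 1 := by
    have h5 : (1 - 1/s) ^ (2 * κ) ≤ ((η:ℝ) ^ 2)⁻¹ := by
      rw [← hp4]; exact le_trans hp1 (hp2 ▸ hp3)
    have h6 : ((η:ℝ) - 1) * (1 - 1/s) ^ (2 * κ) ≤ ((η:ℝ) - 1) * ((η:ℝ) ^ 2)⁻¹ :=
      mul_le_mul_of_nonneg_left h5 (by linarith)
    have h7 : ((η:ℝ) - 1) * ((η:ℝ) ^ 2)⁻¹ < 1 := by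
      rw [mul_inv_lt_iff₀ (by positivity)]
      nlinarith
    linarith
  -- positivity of the real part
  have hpos : 0 < N.re := by
    rw [hReN, ← Finset.add_sum_erase _ _ (Finset.mem_univ (0 : ZMod η))]
    have ht0 : ‖T 0‖ ^ (2 * κ) * (eZ η (-(z * 0))).re
        = (A.card : ℝ) ^ (2 * κ) := by
      rw [hT0, mul_zero, neg_zero, eZ_zero, Complex.one_re, mul_one,
        Complex.norm_natCast]
    rw [ht0]
    have hsum := Finset.card_nsmul_le_sum (Finset.univ.erase (0 : ZMod η)) _ _ hbd
    have hcarde : (Finset.univ.erase (0 : ZMod η)).card = η - 1 := by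
      rw [Finset.card_erase_of_mem (Finset.mem_univ _), Finset.card_univ, ZMod.card]
    rw [hcarde, nsmul_eq_mul] at hsum
    have hcast : ((η - 1 : ℕ) : ℝ) = (η : ℝ) - 1 := by
      have : 1 ≤ η := by omega
      push_cast [this]
      ring
    rw [hcast] at hsum
    have hB : ((1 - 1/s) * (A.card : ℝ)) ^ (2 * κ)
        = (1 - 1/s) ^ (2 * κ) * (A.card : ℝ) ^ (2 * κ) := mul_pow _ _ _
    have hcardpow : (0:ℝ) < (A.card : ℝ) ^ (2 * κ) := pow_pos hcardR _
    nlinarith [hsum, hkey, hB, hcardpow]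
  -- expand N as a double sum of representation counts
  have horth : ∀ w : ZMod η, ∑ j : ZMod η, eZ η (w * j) = if w = 0 then (η:ℂ) else 0 := by
    intro w
    by_cases hw : w = 0
    · subst hw
      simp [eZ_zero, Finset.card_univ, ZMod.card]
    · rw [if_neg hw]
      calc ∑ j : ZMod η, eZ η (w * j) = ∑ j : ZMod η, eZ η (j * w) :=
            Finset.sum_congr rfl fun j _ => by rw [mul_comm]
        _ = 0 := sum_eZ_eq_zero η w hw
  have hexpand : N = ∑ x : ZMod η, ∑ y : ZMod η,
      ((repc A κ x : ℕ) : ℂ) * ((repc A κ y : ℕ) : ℂ) *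
        (if x - y - z = 0 then (η:ℂ) else 0) := by
    rw [hN]
    have hstep : ∀ j : ZMod η, (T j ^ κ) * (starRingEnd ℂ) (T j ^ κ) * eZ η (-(z * j))
        = ∑ x : ZMod η, ∑ y : ZMod η,
            ((repc A κ x : ℕ) : ℂ) * ((repc A κ y : ℕ) : ℂ) * eZ η ((x - y - z) * j) := by
      intro j
      have hconj : (starRingEnd ℂ) (T j ^ κ)
          = ∑ y : ZMod η, ((repc A κ y : ℕ) : ℂ) * eZ η (-(y * j)) := by
        rw [hTp j, map_sum]
        exact Finset.sum_congr rfl fun y _ => by rw [map_mul, map_natCast, conj_eZ]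
      rw [hconj, hTp j, Finset.sum_mul_sum, Finset.sum_mul]
      refine Finset.sum_congr rfl fun x _ => ?_
      rw [Finset.sum_mul]
      refine Finset.sum_congr rfl fun y _ => ?_
      have he : eZ η (x * j) * eZ η (-(y * j)) * eZ η (-(z * j))
          = eZ η ((x - y - z) * j) := by
        rw [← eZ_add, ← eZ_add]
        congr 1
        ring
      rw [← he]
      ring
    calc ∑ j : ZMod η, (T j ^ κ) * (starRingEnd ℂ) (T j ^ κ) * eZ η (-(z * j))
        = ∑ j : ZMod η, ∑ x : ZMod η, ∑ y : ZMod η,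
            ((repc A κ x : ℕ) : ℂ) * ((repc A κ y : ℕ) : ℂ) * eZ η ((x - y - z) * j) :=
          Finset.sum_congr rfl fun j _ => hstep j
      _ = ∑ x : ZMod η, ∑ y : ZMod η, ∑ j : ZMod η,
            ((repc A κ x : ℕ) : ℂ) * ((repc A κ y : ℕ) : ℂ) * eZ η ((x - y - z) * j) := by
          rw [Finset.sum_comm]
          exact Finset.sum_congr rfl fun x _ => Finset.sum_comm
      _ = ∑ x : ZMod η, ∑ y : ZMod η,
            ((repc A κ x : ℕ) : ℂ) * ((repc A κ y : ℕ) : ℂ) *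
              (if x - y - z = 0 then (η:ℂ) else 0) := by
          refine Finset.sum_congr rfl fun x _ => Finset.sum_congr rfl fun y _ => ?_
          rw [← Finset.mul_sum, horth]
  -- extract a representation
  have hNne : N ≠ 0 := by
    intro h
    rw [h] at hpos
    simp at hpos
  rw [hexpand] at hNne
  obtain ⟨x, -, hx⟩ := Finset.exists_ne_zero_of_sum_ne_zero hNne
  obtain ⟨y, -, hy⟩ := Finset.exists_ne_zero_of_sum_ne_zero hx
  have hxy : x - y - z = 0 := by
    by_contra hc
    rw [if_neg hc, mul_zero] at hy
    exact hy rfl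
  rw [if_pos hxy] at hy
  have hηC : (η : ℂ) ≠ 0 := Nat.cast_ne_zero.mpr (NeZero.ne η)
  have hrx : repc A κ x ≠ 0 := by
    intro h
    rw [h] at hy
    simp at hy
  have hry : repc A κ y ≠ 0 := by
    intro h
    rw [h] at hy
    simp at hy
  refine Finset.mem_sub.mpr ⟨x, repc_pos A κ x hrx, y, repc_pos A κ y hry, ?_⟩
  rwa [sub_eq_zero] at hxy
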